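/- Let f : X → X be a continuous map on a compact metric space X. The collection ICT of internally chain transitive compact invariant subsets of X is closed in the Hausdorff metric: if Λ_n ∈ ICT and Λ_n → Λ in the Hausdorff metric, then Λ is compact, invariant and internally chain transitive. -/

import Mathlib

open MeasureTheory Filter Topology Set
open scoped ENNReal NNReal

variable {X : Type*} [MetricSpace X] [CompactSpace X] [MeasurableSpace X] [BorelSpace X]

/-- The empirical (time-average) measure `Υ_{n+1}(x) = (1/(n+1)) ∑_{j=0}^{n} δ_{f^j x}`. -/
noncomputable def empMeas (f : X → X) (x : X) (n : ℕ) : Measure X :=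
  ((n + 1 : ℝ≥0∞))⁻¹ • ∑ j ∈ Finset.range (n + 1), Measure.dirac (f^[j] x)

instance empMeas_prob (f : X → X) (x : X) (n : ℕ) : IsProbabilityMeasure (empMeas f x n) := by
  constructor
  simp only [empMeas, Measure.smul_apply, Measure.coe_finset_sum, Finset.sum_apply,
    MeasureTheory.measure_univ, Finset.sum_const, Finset.card_range, nsmul_eq_mul, mul_one,
    smul_eq_mul]
  rw [show ((n : ℝ≥0∞) + 1) = ((n + 1 : ℕ) : ℝ≥0∞) by push_cast; ring,
    ENNReal.inv_mul_cancel] <;> simp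

/-- The empirical measure as a probability measure. -/
noncomputable def empP (f : X → X) (x : X) (n : ℕ) : ProbabilityMeasure X :=
  ⟨empMeas f x n, empMeas_prob f x n⟩

/-- The p-omega-limit set: all weak* limits of subsequences of the empirical measures. -/
def pOmega (f : X → X) (x : X) : Set (ProbabilityMeasure X) :=
  {μ | ∃ φ : ℕ → ℕ, StrictMono φ ∧ Tendsto (fun i => empP f x (φ i)) atTop (𝓝 μ)}

/-- The omega-limit set of a point. -/
def omegaSet (f : X → X) (x : X) : Set X :=
  ⋂ N : ℕ, closure {y | ∃ n ≥ N, f^[n] x = y}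

/-- An invariant probability measure. -/
def InvMeas (f : X → X) (μ : ProbabilityMeasure X) : Prop :=
  ∀ A : Set X, MeasurableSet A → μ.toMeasure (f ⁻¹' A) = μ.toMeasure A

/-- `μ` is physical-like (SRB-like / observable) w.r.t. the reference measure `Leb`:
every weak* neighborhood basin has positive reference measure. -/
def PhysicalLike (f : X → X) (Leb : Measure X) (μ : ProbabilityMeasure X) : Prop :=
  ∀ U ∈ 𝓝 μ, 0 < Leb {x | ∃ ν ∈ pOmega f x, ν ∈ U}

/-- An ε-chain from `a` to `b` with all points inside `A`. -/
def IsEpsChain (f : X → X) (ε : ℝ) (A : Set X) (a b : X) : Prop :=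
  ∃ n : ℕ, 0 < n ∧ ∃ c : ℕ → X, c 0 = a ∧ c n = b ∧ (∀ i ≤ n, c i ∈ A) ∧
    ∀ i < n, dist (f (c i)) (c (i + 1)) < ε

/-- A nonempty compact invariant internally chain transitive set. -/
def InternallyChainTransitive (f : X → X) (A : Set X) : Prop :=
  A.Nonempty ∧ IsCompact A ∧ f '' A ⊆ A ∧ ∀ a ∈ A, ∀ b ∈ A, ∀ ε > 0, IsEpsChain f ε A a b

/-- Periodic shadowing property. -/
def PeriodicShadowing (f : X → X) : Prop :=
  ∀ ε > 0, ∃ δ > 0, ∀ (x : ℕ → X) (T : ℕ), 0 < T →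
    (∀ i, dist (f (x i)) (x (i + 1)) < δ) → (∀ i, x (i + T) = x i) →
    ∃ y : X, (∃ p : ℕ, 0 < p ∧ f^[p] y = y) ∧ ∀ n, dist (f^[n] y) (x n) < ε

/-- The periodic gluing orbit property of `Λ`. -/
def PeriodicGluing (f : X → X) (Λ : Set X) : Prop :=
  ∀ ε > 0, ∃ M : ℕ, ∀ k : ℕ, 0 < k → ∀ (xs : ℕ → X) (ns : ℕ → ℕ),
    (∀ i < k, xs i ∈ Λ) → (∀ i < k, 1 ≤ ns i) →
    ∃ ms : ℕ → ℕ, (∀ i < k, ms i ≤ M) ∧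
      ∃ z : X, f^[∑ j ∈ Finset.range k, (ns j + ms j)] z = z ∧
        ∀ i < k, ∀ l < ns i,
          dist (f^[(∑ j ∈ Finset.range i, (ns j + ms j)) + l] z) (f^[l] (xs i)) < ε

/-- The set of periodic measures (uniform measures on periodic orbits). -/
def periodicMeasures (f : X → X) : Set (ProbabilityMeasure X) :=
  {μ | ∃ z : X, ∃ m : ℕ, f^[m + 1] z = z ∧ μ = empP f z m}

/-- The topological support of a measure. -/
def mSupport (μ : Measure X) : Set X := {y | ∀ U ∈ 𝓝 y, 0 < μ U}

/-- The collection of internally chain transitive sets is closed in the Hausdorff metric. -/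
theorem internallyChainTransitive_closed_hausdorff (f : X → X) (hf : Continuous f)
    (Λs : ℕ → Set X) (hICT : ∀ n, InternallyChainTransitive f (Λs n))
    (Λ : Set X) (hΛne : Λ.Nonempty) (hΛcl : IsClosed Λ)
    (hH : Tendsto (fun n => Metric.hausdorffDist (Λs n) Λ) atTop (𝓝 0)) :
    InternallyChainTransitive f Λ := by
  classical
  have hΛc : IsCompact Λ := hΛcl.isCompact
  have hfin : ∀ n, EMetric.hausdorffEdist (Λs n) Λ ≠ ⊤ := fun n =>
    Metric.hausdorffEdist_ne_top_of_nonempty_of_bounded (hICT n).1 hΛne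
      (hICT n).2.1.isBounded hΛc.isBounded
  have huc := CompactSpace.uniformContinuous_of_continuous hf
  rw [Metric.uniformContinuous_iff] at huc
  have hev : ∀ r > (0:ℝ), ∃ n, Metric.hausdorffDist (Λs n) Λ < r := by
    intro r hr
    exact (hH.eventually (gt_mem_nhds hr)).exists
  refine ⟨hΛne, hΛc, ?_, ?_⟩
  · rintro _ ⟨y, hy, rfl⟩
    rw [← hΛcl.closure_eq, Metric.mem_closure_iff]
    intro ε hε
    obtain ⟨δ, hδ, hδf⟩ := huc (ε/2) (by positivity)
    set δ' := min δ (ε/2) with hδ'def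
    have hδ'pos : 0 < δ' := lt_min hδ (by positivity)
    obtain ⟨n, hn⟩ := hev δ' hδ'pos
    have hfin' : EMetric.hausdorffEdist Λ (Λs n) ≠ ⊤ := by
      show Metric.hausdorffEDist Λ (Λs n) ≠ ⊤
      rw [EMetric.hausdorffEdist_comm]; exact hfin n
    have hn' : Metric.hausdorffDist Λ (Λs n) < δ' := by rwa [Metric.hausdorffDist_comm]
    obtain ⟨a, ha, hya⟩ := Metric.exists_dist_lt_of_hausdorffDist_lt hy hn' hfin'
    have hfa : f a ∈ Λs n := (hICT n).2.2.1 ⟨a, ha, rfl⟩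
    obtain ⟨z, hz, hfz⟩ := Metric.exists_dist_lt_of_hausdorffDist_lt hfa hn (hfin n)
    refine ⟨z, hz, ?_⟩
    have h1 : dist (f y) (f a) < ε/2 := hδf (lt_of_lt_of_le hya (min_le_left _ _))
    have h2 : dist (f a) z < ε/2 := lt_of_lt_of_le hfz (min_le_right _ _)
    calc dist (f y) z ≤ dist (f y) (f a) + dist (f a) z := dist_triangle _ _ _
      _ < ε := by linarith
  · intro a ha b hb ε hε
    obtain ⟨δ, hδ, hδf⟩ := huc (ε/3) (by positivity)
    set δ' := min δ (ε/3) with hδ'def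
    have hδ'pos : 0 < δ' := lt_min hδ (by positivity)
    obtain ⟨n, hn⟩ := hev δ' hδ'pos
    have hfin' : EMetric.hausdorffEdist Λ (Λs n) ≠ ⊤ := by
      show Metric.hausdorffEDist Λ (Λs n) ≠ ⊤
      rw [EMetric.hausdorffEdist_comm]; exact hfin n
    have hn' : Metric.hausdorffDist Λ (Λs n) < δ' := by rwa [Metric.hausdorffDist_comm]
    obtain ⟨a', ha', haa'⟩ := Metric.exists_dist_lt_of_hausdorffDist_lt ha hn' hfin'
    obtain ⟨b', hb', hbb'⟩ := Metric.exists_dist_lt_of_hausdorffDist_lt hb hn' hfin'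
    obtain ⟨m, hm, c, hc0, hcm, hcA, hcd⟩ := (hICT n).2.2.2 a' ha' b' hb' (ε/3) (by positivity)
    have hproj : ∀ i, ∃ z, z ∈ Λ ∧ (i ≤ m → dist (c i) z < δ') := by
      intro i
      by_cases hi : i ≤ m
      · obtain ⟨z, hz, hdz⟩ := Metric.exists_dist_lt_of_hausdorffDist_lt (hcA i hi) hn (hfin n)
        exact ⟨z, hz, fun _ => hdz⟩
      · exact ⟨a, ha, fun h => absurd h hi⟩
    choose g hgΛ hgd using hproj
    set c' : ℕ → X := fun i => if i = 0 then a else if i = m then b else g i with hc'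
    have hnear : ∀ i ≤ m, dist (c i) (c' i) < δ' := by
      intro i hi
      simp only [hc']
      split_ifs with h0 hm'
      · subst h0; rw [hc0, dist_comm]; exact haa'
      · subst hm'; rw [hcm, dist_comm]; exact hbb'
      · exact hgd i hi
    refine ⟨m, hm, c', by simp [hc'], by simp [hc', hm.ne'], ?_, ?_⟩
    · intro i hi
      simp only [hc']
      split_ifs
      · exact ha
      · exact hb
      · exact hgΛ i
    · intro i hi
      have h1 : dist (f (c' i)) (f (c i)) < ε/3 := by
        apply hδf
        rw [dist_comm]
        exact lt_of_lt_of_le (hnear i hi.le) (min_le_left _ _)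
      have h2 := hcd i hi
      have h3 : dist (c (i+1)) (c' (i+1)) < ε/3 :=
        lt_of_lt_of_le (hnear (i+1) hi) (min_le_right _ _)
      calc dist (f (c' i)) (c' (i+1))
          ≤ dist (f (c' i)) (f (c i)) + dist (f (c i)) (c (i+1)) + dist (c (i+1)) (c' (i+1)) :=
            dist_triangle4 _ _ _ _
        _ < ε := by linarith
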